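/- Confluence is equivalent to first-page convergence: Let (R, W, d) be a filtered presentation of vector spaces over a field K in which every relator is a reduction relator, and assume the associated rewriting relation → on W terminates. Then → is confluent if and only if the presentation is E¹-convergent. -/

import Mathlib

/-- A *filtered presentation of vector spaces* over a field `K`: `K`-vector spaces `R` and `W`,
a basis of `W` indexed by `I` whose elements are called *webs*, together with a degree
function `deg : I → ℕ`, a basis of `R` indexed by `P` whose elements are called *relators*,
and a `K`-linear map `d : R → W` with `d [r] ≠ 0` for every relator `r`. -/
structure FilteredPresentation (K W R I P : Type*) [Field K]
    [AddCommGroup W] [Module K W] [AddCommGroup R] [Module K R] where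
  /-- the basis of webs -/
  web : Module.Basis I K W
  /-- the degree of each web -/
  deg : I → ℕ
  /-- the basis of relators -/
  rel : Module.Basis P K R
  /-- the structure map of the presentation -/
  d : R →ₗ[K] W
  /-- `d` is nonzero on every relator -/
  d_rel_ne_zero : ∀ p : P, d (rel p) ≠ 0

namespace FilteredPresentation

variable {K W R I P : Type*} [Field K]
  [AddCommGroup W] [Module K W] [AddCommGroup R] [Module K R]
  (FP : FilteredPresentation K W R I P)

/-- `FₙW` : the span of the webs of degree at most `n`. -/
def FWle (n : ℕ) : Submodule K W :=
  Submodule.span K ((fun i => FP.web i) '' {i | FP.deg i ≤ n})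

/-- `Fₙ₋₁W` : the span of the webs of degree strictly less than `n`
(so its value at `n = 0` is `F₋₁W = 0`). -/
def FWlt (n : ℕ) : Submodule K W :=
  Submodule.span K ((fun i => FP.web i) '' {i | FP.deg i < n})

/-- The degree `|r|` of a relator: the least `n` such that `d [r] ∈ FₙW`. -/
noncomputable def rdeg (p : P) : ℕ :=
  sInf {n : ℕ | FP.d (FP.rel p) ∈ FP.FWle n}

/-- `Fₙ₋₁R` : the span of the relators of degree strictly less than `n`. -/
def FRlt (n : ℕ) : Submodule K R :=
  Submodule.span K ((fun p => FP.rel p) '' {p | FP.rdeg p < n})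

/-- The *leading term* at filtration level `n` of an element `x` of `R`: the class of `d x`
in `W ⧸ Fₙ₋₁W`.  (For a relator of degree `n` this class lies in `grₙW = FₙW/Fₙ₋₁W`,
realized inside the ambient quotient `W ⧸ Fₙ₋₁W`.) -/
def lead (n : ℕ) (x : R) : W ⧸ FP.FWlt n :=
  (FP.FWlt n).mkQ (FP.d x)

/-- A relator is a *reduction relator* if its leading term is the class of a single web
(necessarily of degree `|r|`). -/
def IsReductionRel (p : P) : Prop :=
  ∃ i : I, FP.deg i = FP.rdeg p ∧
    FP.lead (FP.rdeg p) (FP.rel p) = (FP.FWlt (FP.rdeg p)).mkQ (FP.web i)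

/-- A relator is a *horizontal relator* if its leading term is the difference `u - v` of the
classes of two distinct webs (necessarily of degree `|r|`). -/
def IsHorizontalRel (p : P) : Prop :=
  ∃ i j : I, i ≠ j ∧ FP.deg i = FP.rdeg p ∧ FP.deg j = FP.rdeg p ∧
    FP.lead (FP.rdeg p) (FP.rel p) =
      (FP.FWlt (FP.rdeg p)).mkQ (FP.web i) - (FP.FWlt (FP.rdeg p)).mkQ (FP.web j)

/-- A *canceling sequence* of degree `n`: a (nonempty) finite sequence `s₁, …, s_m` of
signed relators of degree `n` (each `sᵢ` is `±[r]` for a relator `r` of degree `n`),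
together with elements `w₀, w₁, …, w_m` of `W ⧸ Fₙ₋₁W`, each either `0` or the class of a
single web of degree `n`, with `w₁, …, w_{m-1}` nonzero, `w₀ = w_m`, and such that the
leading term of `sᵢ` is `wᵢ - wᵢ₋₁` for all `i`. -/
structure CancelingSeq (n : ℕ) where
  /-- the underlying list `s₁, …, s_m` of signed relators -/
  s : List R
  /-- the witnessing list `w₀, w₁, …, w_m` -/
  w : List (W ⧸ FP.FWlt n)
  nonempty : 0 < s.length
  len : w.length = s.length + 1
  signed : ∀ x ∈ s, ∃ p : P, (x = FP.rel p ∨ x = -FP.rel p) ∧ FP.rdeg p = n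
  w_mem : ∀ u ∈ w, u = 0 ∨ ∃ i : I, FP.deg i = n ∧ u = (FP.FWlt n).mkQ (FP.web i)
  w_mid_ne : ∀ k : ℕ, 0 < k → k < s.length → w.getD k 0 ≠ 0
  w_cycle : w.getD 0 0 = w.getD s.length 0
  lead_step : ∀ k < s.length,
    FP.lead n (s.getD k 0) = w.getD (k + 1) 0 - w.getD k 0

namespace CancelingSeq

variable {FP} {n : ℕ}

/-- `Σs` : the sum `s₁ + ⋯ + s_m ∈ R` of the signed relators of a canceling sequence. -/
def total (c : FP.CancelingSeq n) : R := c.s.sum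

/-- A canceling sequence is a *reduction sequence* if `w₀ = w_m = 0`. -/
def IsReductionSeq (c : FP.CancelingSeq n) : Prop :=
  c.w.getD 0 0 = 0 ∧ c.w.getD c.s.length 0 = 0

/-- A canceling sequence is a *horizontal sequence* if it is not a reduction sequence. -/
def IsHorizontalSeq (c : FP.CancelingSeq n) : Prop :=
  ¬ c.IsReductionSeq

/-- A canceling sequence `s` of degree `n` is *consistently reducible* if there exists
`y ∈ Fₙ₋₁R` with `d y = d (Σs)`. -/
def ConsistentlyReducible (c : FP.CancelingSeq n) : Prop :=
  ∃ y ∈ FP.FRlt n, FP.d y = FP.d c.total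

end CancelingSeq

/-- The presentation is *E¹-convergent* (its associated two-column spectral sequence
converges at the first page) if for every `n ∈ ℕ` and every `x` in the span of the
relators of degree exactly `n` with `d x ∈ Fₙ₋₁W`, there exists `y ∈ Fₙ₋₁R` with
`d y = d x`. -/
def E1Convergent : Prop :=
  ∀ n : ℕ, ∀ x ∈ Submodule.span K ((fun p => FP.rel p) '' {p | FP.rdeg p = n}),
    FP.d x ∈ FP.FWlt n → ∃ y ∈ FP.FRlt n, FP.d y = FP.d x

end FilteredPresentation

namespace FilteredPresentation

variable {K W R I P : Type*} [Field K]
  [AddCommGroup W] [Module K W] [AddCommGroup R] [Module K R]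
  (FP : FilteredPresentation K W R I P)

/-- The rewriting relation associated to a presentation all of whose relators are reduction
relators: `x → y` if and only if there is a relator `r` whose leading term is the class of a
web `w` such that the coefficient `c` of `w` in the basis expansion of `x` is nonzero and
`y = x - c • d [r]`. -/
noncomputable def Rw (x y : W) : Prop :=
  ∃ (p : P) (i : I), FP.deg i = FP.rdeg p ∧
    FP.lead (FP.rdeg p) (FP.rel p) = (FP.FWlt (FP.rdeg p)).mkQ (FP.web i) ∧
    FP.web.repr x i ≠ 0 ∧
    y = x - FP.web.repr x i • FP.d (FP.rel p)

end FilteredPresentation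


namespace FilteredPresentation

variable {K W R I P : Type*} [Field K]
  [AddCommGroup W] [Module K W] [AddCommGroup R] [Module K R]
  (FP : FilteredPresentation K W R I P)

theorem mem_FWle_iff {x : W} {n : ℕ} :
    x ∈ FP.FWle n ↔ ∀ i, FP.web.repr x i ≠ 0 → FP.deg i ≤ n := by
  rw [FWle, show (fun i => FP.web i) = ⇑FP.web from rfl, Module.Basis.mem_span_image]
  constructor
  · intro h i hi
    exact h (by simpa [Finsupp.mem_support_iff] using hi)
  · intro h i hi
    exact h i (by simpa [Finsupp.mem_support_iff] using (Finset.mem_coe.mp hi))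

theorem mem_FWlt_iff {x : W} {n : ℕ} :
    x ∈ FP.FWlt n ↔ ∀ i, FP.web.repr x i ≠ 0 → FP.deg i < n := by
  rw [FWlt, show (fun i => FP.web i) = ⇑FP.web from rfl, Module.Basis.mem_span_image]
  constructor
  · intro h i hi
    exact h (by simpa [Finsupp.mem_support_iff] using hi)
  · intro h i hi
    exact h i (by simpa [Finsupp.mem_support_iff] using (Finset.mem_coe.mp hi))

theorem exists_mem_FWle (x : W) : ∃ n, x ∈ FP.FWle n := by
  refine ⟨(FP.web.repr x).support.sup FP.deg, (FP.mem_FWle_iff).mpr ?_⟩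
  intro i hi
  exact Finset.le_sup (Finsupp.mem_support_iff.mpr hi)

theorem d_rel_mem_FWle (p : P) : FP.d (FP.rel p) ∈ FP.FWle (FP.rdeg p) := by
  have hne : {n : ℕ | FP.d (FP.rel p) ∈ FP.FWle n}.Nonempty := FP.exists_mem_FWle _
  exact Nat.sInf_mem hne

theorem FWle_le_FWlt {m n : ℕ} (h : m < n) : FP.FWle m ≤ FP.FWlt n := by
  intro x hx
  rw [mem_FWle_iff] at hx
  rw [mem_FWlt_iff]
  intro i hi
  exact lt_of_le_of_lt (hx i hi) h

theorem sub_mem_FWlt_of_lead {p : P} {i : I}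
    (hlead : FP.lead (FP.rdeg p) (FP.rel p) = (FP.FWlt (FP.rdeg p)).mkQ (FP.web i)) :
    FP.d (FP.rel p) - FP.web i ∈ FP.FWlt (FP.rdeg p) := by
  have := hlead
  rw [lead, Submodule.mkQ_apply, Submodule.mkQ_apply, Submodule.Quotient.eq] at this
  exact this

theorem repr_d_rel_self {p : P} {i : I} (hdeg : FP.deg i = FP.rdeg p)
    (hlead : FP.lead (FP.rdeg p) (FP.rel p) = (FP.FWlt (FP.rdeg p)).mkQ (FP.web i)) :
    FP.web.repr (FP.d (FP.rel p)) i = 1 := by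
  have h := (FP.mem_FWlt_iff).mp (FP.sub_mem_FWlt_of_lead hlead) i
  have h0 : FP.web.repr (FP.d (FP.rel p) - FP.web i) i = 0 := by
    by_contra hne
    exact absurd (h hne) (by omega)
  rw [map_sub, Finsupp.sub_apply, FP.web.repr_self, Finsupp.single_eq_same,
    sub_eq_zero] at h0
  exact h0

theorem d_mem_FWlt_of_FRlt {n : ℕ} {u : R} (hu : u ∈ FP.FRlt n) :
    FP.d u ∈ FP.FWlt n := by
  have : FP.FRlt n ≤ Submodule.comap FP.d (FP.FWlt n) := by
    rw [FRlt]
    refine Submodule.span_le.mpr ?_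
    rintro _ ⟨p, hp, rfl⟩
    exact FP.FWle_le_FWlt hp (FP.d_rel_mem_FWle p)
  exact this hu

/-- `v` is irreducible for the rewriting relation: its coefficient on every leading web
vanishes. -/
def Irr (v : W) : Prop :=
  ∀ p i, FP.deg i = FP.rdeg p →
    FP.lead (FP.rdeg p) (FP.rel p) = (FP.FWlt (FP.rdeg p)).mkQ (FP.web i) →
    FP.web.repr v i = 0

theorem Irr.not_rw {v : W} (hv : FP.Irr v) (y : W) : ¬ FP.Rw v y := by
  rintro ⟨p, i, hdeg, hlead, hne, -⟩
  exact hne (hv p i hdeg hlead)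

theorem irr_of_not_rw {v : W} (hv : ∀ y, ¬ FP.Rw v y) : FP.Irr v := by
  intro p i hdeg hlead
  by_contra hne
  exact hv _ ⟨p, i, hdeg, hlead, hne, rfl⟩

theorem irr_sub {v w : W} (hv : FP.Irr v) (hw : FP.Irr w) : FP.Irr (v - w) := by
  intro p i hdeg hlead
  rw [map_sub, Finsupp.sub_apply, hv p i hdeg hlead, hw p i hdeg hlead, sub_zero]

theorem irr_zero : FP.Irr 0 := by
  intro p i _ _
  simp

theorem exists_mem_FRlt (u : R) : ∃ n, u ∈ FP.FRlt n := by
  refine ⟨(FP.rel.repr u).support.sup FP.rdeg + 1, ?_⟩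
  rw [FRlt, show (fun p => FP.rel p) = ⇑FP.rel from rfl, Module.Basis.mem_span_image]
  intro p hp
  have := Finset.le_sup (f := FP.rdeg) (Finset.mem_coe.mp hp)
  simpa using Nat.lt_succ_of_le this

theorem FRlt_zero : FP.FRlt 0 = ⊥ := by
  have : {p | FP.rdeg p < 0} = (∅ : Set P) := by ext p; simp
  rw [FRlt, this, Set.image_empty, Submodule.span_empty]

/-- The key lemma for the converse direction: if the presentation is `E¹`-convergent, then
any irreducible element in the image of a filtration level of `R` is zero. -/
theorem irr_eq_zero (hred : ∀ p : P, FP.IsReductionRel p) (hE1 : FP.E1Convergent) :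
    ∀ n : ℕ, ∀ v ∈ Submodule.map FP.d (FP.FRlt n), FP.Irr v → v = 0 := by
  intro n
  induction n with
  | zero =>
    rintro v hv -
    rw [FP.FRlt_zero] at hv
    simpa using hv
  | succ n ih =>
    rintro v ⟨u, hu, rfl⟩ hirr
    have hset : {p | FP.rdeg p < n + 1} = {p | FP.rdeg p = n} ∪ {p | FP.rdeg p < n} := by
      ext p; simp only [Set.mem_setOf_eq, Set.mem_union]; omega
    rw [FRlt, hset, Set.image_union, Submodule.span_union] at hu
    obtain ⟨x, hx, u', hu', rfl⟩ := Submodule.mem_sup.mp hu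
    have hu'2 : u' ∈ FP.FRlt n := hu'
    have hdu' : FP.d u' ∈ FP.FWlt n := FP.d_mem_FWlt_of_FRlt hu'2
    -- `d x ∈ FWle n`
    have hdxle : FP.d x ∈ FP.FWle n := by
      have : Submodule.span K ((fun p => FP.rel p) '' {p | FP.rdeg p = n}) ≤
          Submodule.comap FP.d (FP.FWle n) := by
        refine Submodule.span_le.mpr ?_
        rintro _ ⟨p, hp, rfl⟩
        have := FP.d_rel_mem_FWle p
        rwa [Set.mem_setOf_eq.mp hp] at this
      exact this hx
    -- `d x ∈ FWlt n`
    have hdxlt : FP.d x ∈ FP.FWlt n := by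
      rw [mem_FWlt_iff]
      intro j hj
      rcases lt_or_eq_of_le ((FP.mem_FWle_iff).mp hdxle j hj) with h | h
      · exact h
      exfalso
      -- `deg j = n`; the coefficient of `d x` at `j` equals that of `v = d (x + u')`
      have hdu'j : FP.web.repr (FP.d u') j = 0 := by
        by_contra hne
        have := (FP.mem_FWlt_iff).mp hdu' j hne
        omega
      by_cases hlw : ∃ p, FP.deg j = FP.rdeg p ∧
          FP.lead (FP.rdeg p) (FP.rel p) = (FP.FWlt (FP.rdeg p)).mkQ (FP.web j)
      · obtain ⟨p, hdeg, hlead⟩ := hlw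
        have h0 := hirr p j hdeg hlead
        rw [map_add, map_add, Finsupp.add_apply, hdu'j, add_zero] at h0
        exact hj h0
      · -- `j` is not a leading web, so the coefficient of `d x` at `j` is zero
        push_neg at hlw
        have : Submodule.span K ((fun p => FP.rel p) '' {p | FP.rdeg p = n}) ≤
            LinearMap.ker ((Finsupp.lapply j) ∘ₗ
              (FP.web.repr.toLinearMap ∘ₗ FP.d)) := by
          refine Submodule.span_le.mpr ?_
          rintro _ ⟨p, hp, rfl⟩
          have hpn : FP.rdeg p = n := hp
          obtain ⟨i, hdeg, hlead⟩ := hred p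
          have hij : i ≠ j := by
            rintro rfl
            exact hlw p (by omega) hlead
          have hsub := (FP.mem_FWlt_iff).mp (FP.sub_mem_FWlt_of_lead hlead) j
          have h0 : FP.web.repr (FP.d (FP.rel p) - FP.web i) j = 0 := by
            by_contra hne
            have := hsub hne
            omega
          rw [map_sub, Finsupp.sub_apply, FP.web.repr_self,
            Finsupp.single_eq_of_ne hij.symm, sub_zero] at h0
          simpa [LinearMap.mem_ker] using h0
        have := this hx
        simp only [LinearMap.mem_ker, LinearMap.comp_apply, LinearEquiv.coe_toLinearMap,
          Finsupp.lapply_apply] at this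
        exact hj this
    -- apply E¹-convergence
    obtain ⟨y, hy, hdy⟩ := hE1 n x hx hdxlt
    have : FP.d (x + u') = FP.d (y + u') := by rw [map_add, map_add, hdy]
    rw [this]
    refine ih _ ⟨y + u', add_mem hy hu'2, rfl⟩ ?_
    rwa [← this]

end FilteredPresentation

/-- **Confluence is equivalent to first-page convergence.**
Let `(R, W, d)` be a filtered presentation of vector spaces over a field `K` in which every
relator is a reduction relator, and assume the associated rewriting relation `→` on `W`
terminates (there is no infinite chain `x₀ → x₁ → x₂ → ⋯`).  Then `→` is confluent if and
only if the presentation is `E¹`-convergent. -/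
theorem FilteredPresentation.confluent_iff_e1Convergent
    {K W R I P : Type*} [Field K]
    [AddCommGroup W] [Module K W] [AddCommGroup R] [Module K R]
    (FP : FilteredPresentation K W R I P)
    (hred : ∀ p : P, FP.IsReductionRel p)
    (hterm : ¬ ∃ f : ℕ → W, ∀ k : ℕ, FP.Rw (f k) (f (k + 1))) :
    (∀ x y z : W, Relation.ReflTransGen FP.Rw x y → Relation.ReflTransGen FP.Rw x z →
        ∃ u : W, Relation.ReflTransGen FP.Rw y u ∧ Relation.ReflTransGen FP.Rw z u) ↔
      FP.E1Convergent := by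
  have rtg0 : ∀ u : W, Relation.ReflTransGen FP.Rw 0 u → u = 0 := by
    intro u h
    rcases Relation.ReflTransGen.cases_head h with rfl | ⟨c, hc, -⟩
    · rfl
    · obtain ⟨p, i, -, -, hne, -⟩ := hc
      simp at hne
  constructor
  · -- confluence implies E¹-convergence
    intro conf
    have jtrans : ∀ a b c : W,
        (∃ u, Relation.ReflTransGen FP.Rw a u ∧ Relation.ReflTransGen FP.Rw b u) →
        (∃ u, Relation.ReflTransGen FP.Rw b u ∧ Relation.ReflTransGen FP.Rw c u) →
        ∃ u, Relation.ReflTransGen FP.Rw a u ∧ Relation.ReflTransGen FP.Rw c u := by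
      rintro a b c ⟨u, hau, hbu⟩ ⟨w, hbw, hcw⟩
      obtain ⟨t, hut, hwt⟩ := conf b u w hbu hbw
      exact ⟨t, hau.trans hut, hcw.trans hwt⟩
    have jstep : ∀ (x : W) (c : K) (p : P),
        ∃ u, Relation.ReflTransGen FP.Rw x u ∧
          Relation.ReflTransGen FP.Rw (x + c • FP.d (FP.rel p)) u := by
      intro x c p
      obtain ⟨i, hdeg, hlead⟩ := hred p
      by_cases hc : c = 0
      · exact ⟨x, .refl, by rw [hc, zero_smul, add_zero]⟩
      set a := FP.web.repr x i with ha
      have hrepr : FP.web.repr (x + c • FP.d (FP.rel p)) i = a + c := by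
        rw [map_add, map_smul, Finsupp.add_apply, Finsupp.smul_apply,
          FP.repr_d_rel_self hdeg hlead, smul_eq_mul, mul_one]
      by_cases hac : a + c = 0
      · have hane : a ≠ 0 := by
          intro h; rw [h, zero_add] at hac; exact hc hac
        have hxeq : x + c • FP.d (FP.rel p) = x - a • FP.d (FP.rel p) := by
          have hcna : c = -a := by linear_combination hac
          rw [hcna, neg_smul, ← sub_eq_add_neg]
        refine ⟨x - a • FP.d (FP.rel p), .single ⟨p, i, hdeg, hlead, hane, rfl⟩, ?_⟩
        rw [hxeq]
      · have h2 : FP.Rw (x + c • FP.d (FP.rel p)) (x - a • FP.d (FP.rel p)) := by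
          refine ⟨p, i, hdeg, hlead, by rw [hrepr]; exact hac, ?_⟩
          rw [hrepr, add_smul]; abel
        by_cases hane : a = 0
        · refine ⟨x, .refl, .single ?_⟩
          rwa [hane, zero_smul, sub_zero] at h2
        · exact ⟨x - a • FP.d (FP.rel p), .single ⟨p, i, hdeg, hlead, hane, rfl⟩, .single h2⟩
    have j0 : ∀ v ∈ LinearMap.range FP.d,
        ∃ u, Relation.ReflTransGen FP.Rw 0 u ∧ Relation.ReflTransGen FP.Rw v u := by
      rintro _ ⟨r, rfl⟩
      have key : ∀ f : P →₀ K,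
          ∃ u, Relation.ReflTransGen FP.Rw 0 u ∧
            Relation.ReflTransGen FP.Rw (FP.d (FP.rel.repr.symm f)) u := by
        intro f
        induction f using Finsupp.induction with
        | zero =>
          refine ⟨0, .refl, ?_⟩
          simp only [map_zero]
          exact Relation.ReflTransGen.refl
        | single_add p b f hpf hb ih =>
          have heq : FP.d (FP.rel.repr.symm (Finsupp.single p b + f))
              = FP.d (FP.rel.repr.symm f) + b • FP.d (FP.rel p) := by
            rw [map_add, map_add, FP.rel.repr_symm_single, map_smul, add_comm]
          rw [heq]
          exact jtrans _ _ _ ih (jstep _ b p)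
      have := key (FP.rel.repr r)
      rwa [LinearEquiv.symm_apply_apply] at this
    intro n x hx hdx
    obtain ⟨u, h0u, hvu⟩ := j0 (FP.d x) ⟨x, rfl⟩
    have hu0 := rtg0 u h0u
    subst hu0
    have chain : ∀ v w : W, Relation.ReflTransGen FP.Rw v w →
        v ∈ FP.FWlt n → ∃ y ∈ FP.FRlt n, FP.d y = v - w := by
      intro v w h
      induction h using Relation.ReflTransGen.head_induction_on with
      | refl => exact fun _ => ⟨0, zero_mem _, by simp⟩
      | @head a c hstep htail ih =>
        intro hv
        obtain ⟨p, i, hdeg, hlead, hne, rfl⟩ := hstep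
        have hdegi : FP.deg i < n := (FP.mem_FWlt_iff).mp hv i hne
        have hrd : FP.rdeg p < n := by omega
        have hdmem : FP.d (FP.rel p) ∈ FP.FWlt n :=
          FP.FWle_le_FWlt hrd (FP.d_rel_mem_FWle p)
        obtain ⟨y, hy, hdy⟩ := ih (sub_mem hv (Submodule.smul_mem _ _ hdmem))
        refine ⟨y + FP.web.repr a i • FP.rel p, ?_, ?_⟩
        · exact add_mem hy (Submodule.smul_mem _ _
            (Submodule.subset_span ⟨p, hrd, rfl⟩))
        · rw [map_add, map_smul, hdy]; abel
    obtain ⟨y, hy, hdy⟩ := chain (FP.d x) 0 hvu hdx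
    exact ⟨y, hy, by simpa using hdy⟩
  · -- E¹-convergence implies confluence
    intro hE1 x y z hxy hxz
    have nf : ∀ a : W, ∃ b, Relation.ReflTransGen FP.Rw a b ∧ FP.Irr b := by
      by_contra h
      push_neg at h
      obtain ⟨a, ha⟩ := h
      have step : ∀ b : {b // Relation.ReflTransGen FP.Rw a b},
          ∃ c : {b // Relation.ReflTransGen FP.Rw a b}, FP.Rw b.1 c.1 := by
        rintro ⟨b, hb⟩
        have hni : ¬ FP.Irr b := ha b hb
        have hstep : ∃ c, FP.Rw b c := by
          by_contra hnc
          push_neg at hnc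
          exact hni (FP.irr_of_not_rw hnc)
        obtain ⟨c, hc⟩ := hstep
        exact ⟨⟨c, hb.tail hc⟩, hc⟩
      choose g hg using step
      refine hterm ⟨fun k => (g^[k] ⟨a, .refl⟩).1, fun k => ?_⟩
      simp only [Function.iterate_succ_apply']
      exact hg _
    have rangediff : ∀ a b : W, Relation.ReflTransGen FP.Rw a b →
        a - b ∈ LinearMap.range FP.d := by
      intro a b h
      induction h with
      | refl => simpa using zero_mem _
      | @tail m w ham hmw ih =>
        obtain ⟨p, i, -, -, -, rfl⟩ := hmw
        have heq : a - (m - FP.web.repr m i • FP.d (FP.rel p)) =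
            (a - m) + FP.d (FP.web.repr m i • FP.rel p) := by
          rw [map_smul]; abel
        rw [heq]
        exact add_mem ih ⟨_, rfl⟩
    obtain ⟨y', hyy', hy'⟩ := nf y
    obtain ⟨z', hzz', hz'⟩ := nf z
    have h1 : x - y' ∈ LinearMap.range FP.d := rangediff _ _ (hxy.trans hyy')
    have h2 : x - z' ∈ LinearMap.range FP.d := rangediff _ _ (hxz.trans hzz')
    have h3 : y' - z' ∈ LinearMap.range FP.d := by
      have := sub_mem h2 h1
      rwa [show x - z' - (x - y') = y' - z' by abel] at this
    obtain ⟨u, hu⟩ := h3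
    obtain ⟨m, hm⟩ := FP.exists_mem_FRlt u
    have h0 : y' - z' = 0 := by
      rw [← hu]
      exact FP.irr_eq_zero hred hE1 m _ ⟨u, hm, rfl⟩ (by rw [hu]; exact FP.irr_sub hy' hz')
    exact ⟨y', hyy', sub_eq_zero.mp h0 ▸ hzz'⟩
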